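/- Fix $\widehat{\phi_0}\in C_c^\infty(\mathbb{R})$ with $0\le\widehat{\phi_0}\le 1$, $\widehat{\phi_0}(\xi)=1$ for $|\xi|<1/10$ and $\widehat{\phi_0}(\xi)=0$ for $|\xi|>1/5$; let $\phi_0$ be its inverse Fourier transform, so $|\phi_0(x)|\ge c_0>0$ for all $|x|<\rho_0$ for some $\rho_0>0$. Let $0<4\delta\le\epsilon<1/10$, set $a_j=j^{-(1/2+\delta)}$ and $\lambda_j=j^{\epsilon}$, and define $f=\sum_{j\ge 10} a_j\,\lambda_j^{1/2}\,\phi_0(\lambda_j x)\,e^{i2^j x}$. Then: (i) $\|f\|_{L^2(\mathbb{R})}<\infty$; (ii) $\sup_j |a_j|\lambda_j^{1/2}<\infty$ (so $\|f\|_{\dot B^0_{\infty,\infty}}<\infty$); (iii) $\int_{\mathbb{R}}\big(\sum_j |P_j f(x)|^2\big)^2 dx=\infty$, where $P_j$ is the Littlewood–Paley projection to frequencies $|\xi|\sim 2^j$. Consequently the estimate $\|\sum_j (P_j f)^2\|_{L^2}\lesssim \|f\|_{L^2}\|f\|_{\dot B^0_{\infty,\infty}}$ fails. -/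

import Mathlib

open MeasureTheory
open scoped ENNReal

/-- The Fourier transform on `ℝ` in the convention `f̂(ξ) = ∫ f(x) e^{-i x ξ} dx`. -/
noncomputable def pFT1 (f : ℝ → ℂ) (ξ : ℝ) : ℂ :=
  ∫ x : ℝ, Complex.exp (-(Complex.I) * ((x * ξ : ℝ) : ℂ)) * f x

open scoped FourierTransform

lemma pFT1_eq (f : ℝ → ℂ) (ξ : ℝ) : pFT1 f ξ = 𝓕 f (ξ / (2 * Real.pi)) := by
  rw [Real.fourier_real_eq_integral_exp_smul, pFT1]
  refine integral_congr_ae (Filter.Eventually.of_forall fun v => ?_)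
  simp only [smul_eq_mul]
  congr 1
  have h : -2 * Real.pi * v * (ξ / (2 * Real.pi)) = -(v * ξ) := by
    field_simp
  rw [h]
  push_cast
  ring

lemma fourier_eq_pFT1 (f : ℝ → ℂ) (w : ℝ) : 𝓕 f w = pFT1 f (2 * Real.pi * w) := by
  rw [pFT1_eq]
  congr 1
  field_simp

lemma pFT1_schwartz_eq (φ : SchwartzMap ℝ ℂ) :
    pFT1 ⇑φ = fun ξ => (SchwartzMap.fourierTransformCLM ℂ φ) (ξ * (2 * Real.pi)⁻¹) := by
  funext ξ
  rw [pFT1_eq, SchwartzMap.fourierTransformCLM_apply, div_eq_mul_inv, SchwartzMap.fourier_coe]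

lemma pFT1_cont (φ : SchwartzMap ℝ ℂ) : Continuous (pFT1 ⇑φ) := by
  rw [pFT1_schwartz_eq]
  exact (SchwartzMap.continuous _).comp (by fun_prop)

lemma pFT1_int (φ : SchwartzMap ℝ ℂ) : Integrable (pFT1 ⇑φ) := by
  rw [pFT1_schwartz_eq]
  exact (SchwartzMap.integrable _).comp_mul_right'
    (inv_ne_zero (by positivity : (0:ℝ) < 2 * Real.pi).ne')

lemma inversion (φ : SchwartzMap ℝ ℂ) (y : ℝ) :
    φ y = (((2 * Real.pi)⁻¹ : ℝ) : ℂ) *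
      ∫ η : ℝ, Complex.exp (Complex.I * ((y * η : ℝ) : ℂ)) * pFT1 (⇑φ) η := by
  have hπ : (0:ℝ) < 2 * Real.pi := by positivity
  have hinv : 𝓕⁻ (𝓕 ⇑φ) = ⇑φ :=
    Continuous.fourierInv_fourier_eq φ.continuous φ.integrable
      ((SchwartzMap.fourierTransformCLM ℂ φ).integrable)
  have h1 : φ y = ∫ w : ℝ, Complex.exp (Complex.I * ((y * (2 * Real.pi * w) : ℝ) : ℂ)) *
      pFT1 (⇑φ) (2 * Real.pi * w) := by
    conv_lhs => rw [← hinv]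
    rw [Real.fourierInv_eq_fourier_neg,
      Real.fourier_real_eq_integral_exp_smul]
    refine integral_congr_ae (Filter.Eventually.of_forall fun w => ?_)
    simp only [smul_eq_mul]
    rw [← fourier_eq_pFT1]
    congr 1
    push_cast
    ring
  have h2 := MeasureTheory.Measure.integral_comp_mul_left
    (fun η : ℝ => Complex.exp (Complex.I * ((y * η : ℝ) : ℂ)) * pFT1 (⇑φ) η) (2 * Real.pi)
  rw [h1, h2, abs_of_pos (inv_pos.2 hπ), Complex.real_smul]

lemma scaledFT (φ : SchwartzMap ℝ ℂ) (lam α : ℝ) (hlam : 0 < lam) :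
    ∫ x : ℝ, φ (lam * x) * Complex.exp (Complex.I * ((α * x : ℝ) : ℂ)) =
      ((lam⁻¹ : ℝ) : ℂ) * pFT1 (⇑φ) (-(α / lam)) := by
  have h1 : ∀ x : ℝ, φ (lam * x) * Complex.exp (Complex.I * ((α * x : ℝ) : ℂ)) =
      (fun y : ℝ => φ y * Complex.exp (Complex.I * ((α / lam * y : ℝ) : ℂ))) (lam * x) := by
    intro x
    simp only
    congr 2
    push_cast
    rw [div_mul_eq_mul_div, mul_div_assoc]
    rw [mul_comm (lam:ℂ) (x:ℂ), mul_div_assoc, div_self (by exact_mod_cast hlam.ne' : (lam:ℂ) ≠ 0), mul_one]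
  simp only [h1]
  rw [MeasureTheory.Measure.integral_comp_mul_left
    (fun y : ℝ => φ y * Complex.exp (Complex.I * ((α / lam * y : ℝ) : ℂ))) lam,
    abs_of_pos (inv_pos.2 hlam), Complex.real_smul]
  congr 1
  rw [pFT1]
  refine integral_congr_ae (Filter.Eventually.of_forall fun y => ?_)
  simp only
  rw [mul_comm]
  congr 1
  push_cast
  ring

lemma conj_inversion (φ : SchwartzMap ℝ ℂ)
    (hval : ∀ ξ : ℝ, (pFT1 (⇑φ) ξ).im = 0) (y : ℝ) :
    (starRingEnd ℂ) (φ y) = (((2 * Real.pi)⁻¹ : ℝ) : ℂ) *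
      ∫ η : ℝ, Complex.exp (-Complex.I * ((y * η : ℝ) : ℂ)) * pFT1 (⇑φ) η := by
  have hFreal : ∀ ξ, (starRingEnd ℂ) (pFT1 (⇑φ) ξ) = pFT1 (⇑φ) ξ := fun ξ =>
    Complex.conj_eq_iff_im.2 (hval ξ)
  rw [inversion φ y, map_mul, Complex.conj_ofReal, ← integral_conj]
  congr 1
  refine integral_congr_ae (Filter.Eventually.of_forall fun η => ?_)
  simp only
  rw [map_mul, hFreal, ← Complex.exp_conj, map_mul, Complex.conj_I, Complex.conj_ofReal,
    neg_mul]

lemma ortho (φ : SchwartzMap ℝ ℂ)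
    (hval : ∀ ξ : ℝ, (pFT1 (⇑φ) ξ).im = 0)
    (h0 : ∀ ξ : ℝ, 1 / 5 < |ξ| → pFT1 (⇑φ) ξ = 0)
    (lam mu θ : ℝ) (hlam : 0 < lam) (hmu : 0 < mu)
    (hsep : lam / 5 + mu / 5 < |θ|) :
    ∫ x : ℝ, φ (lam * x) * (starRingEnd ℂ) (φ (mu * x)) *
      Complex.exp (Complex.I * ((θ * x : ℝ) : ℂ)) = 0 := by
  set F := pFT1 (⇑φ) with hF
  have hFc : Continuous F := pFT1_cont φ
  have hFi : Integrable F := pFT1_int φ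
  set G : ℝ → ℝ → ℂ := fun x η =>
    F η * (φ (lam * x) * Complex.exp (Complex.I * (((θ - mu * η) * x : ℝ) : ℂ))) with hG
  -- pointwise identity
  have hpt : ∀ x : ℝ, φ (lam * x) * (starRingEnd ℂ) (φ (mu * x)) *
      Complex.exp (Complex.I * ((θ * x : ℝ) : ℂ)) =
      (((2 * Real.pi)⁻¹ : ℝ) : ℂ) * ∫ η : ℝ, G x η := by
    intro x
    rw [conj_inversion φ hval (mu * x)]
    rw [show φ (lam * x) * ((((2 * Real.pi)⁻¹ : ℝ) : ℂ) *
        ∫ η : ℝ, Complex.exp (-Complex.I * ((mu * x * η : ℝ) : ℂ)) * F η) *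
        Complex.exp (Complex.I * ((θ * x : ℝ) : ℂ)) =
        (((2 * Real.pi)⁻¹ : ℝ) : ℂ) *
        ((∫ η : ℝ, Complex.exp (-Complex.I * ((mu * x * η : ℝ) : ℂ)) * F η) *
          (φ (lam * x) * Complex.exp (Complex.I * ((θ * x : ℝ) : ℂ)))) from by ring]
    congr 1
    rw [← integral_mul_const]
    refine integral_congr_ae (Filter.Eventually.of_forall fun η => ?_)
    simp only [hG]
    rw [show Complex.exp (-Complex.I * ((mu * x * η : ℝ) : ℂ)) * F η *
        (φ (lam * x) * Complex.exp (Complex.I * ((θ * x : ℝ) : ℂ))) =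
        F η * (φ (lam * x) * (Complex.exp (-Complex.I * ((mu * x * η : ℝ) : ℂ)) *
          Complex.exp (Complex.I * ((θ * x : ℝ) : ℂ)))) from by ring]
    rw [← Complex.exp_add]
    congr 2
    push_cast
    ring
  simp only [hpt]
  rw [integral_const_mul]
  -- Fubini
  have hGi : Integrable (Function.uncurry G) (volume.prod volume) := by
    have hcont : Continuous (Function.uncurry G) := by
      apply Continuous.mul
      · exact hFc.comp continuous_snd
      · apply Continuous.mul
        · exact φ.continuous.comp (continuous_const.mul continuous_fst)
        · apply Complex.continuous_exp.comp
          apply continuous_const.mul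
          exact Complex.continuous_ofReal.comp
            (((continuous_const.sub (continuous_const.mul continuous_snd)).mul continuous_fst))
    have hB : Integrable (fun z : ℝ × ℝ => ‖φ (lam * z.1)‖ * ‖F z.2‖) (volume.prod volume) :=
      Integrable.mul_prod ((φ.integrable.comp_mul_left' hlam.ne').norm) hFi.norm
    refine hB.mono' hcont.aestronglyMeasurable
      (Filter.Eventually.of_forall fun z => ?_)
    rw [Function.uncurry]
    simp only [hG, norm_mul]
    rw [show Complex.I * (((θ - mu * z.2) * z.1 : ℝ) : ℂ) =
      (((θ - mu * z.2) * z.1 : ℝ) : ℂ) * Complex.I from mul_comm _ _]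
    rw [Complex.norm_exp_ofReal_mul_I, mul_one]
    exact le_of_eq (mul_comm _ _)
  rw [MeasureTheory.integral_integral_swap hGi]
  have hz : ∀ η : ℝ, (∫ x : ℝ, G x η) = 0 := by
    intro η
    simp only [hG]
    rw [integral_const_mul, scaledFT φ lam (θ - mu * η) hlam]
    by_cases hη : 1 / 5 < |η|
    · rw [h0 η hη]
      simp
    · push_neg at hη
      have habs : 1 / 5 < |(-((θ - mu * η) / lam))| := by
        rw [abs_neg, abs_div, abs_of_pos hlam, lt_div_iff₀ hlam]
        have h1 : |mu * η| ≤ mu / 5 := by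
          rw [abs_mul, abs_of_pos hmu]
          nlinarith [abs_nonneg η]
        have h2 : |θ| - |mu * η| ≤ |θ - mu * η| := abs_sub_abs_le_abs_sub _ _
        nlinarith
      rw [← hF, h0 _ habs]
      simp
  simp only [hz]
  simp

lemma sep_lemma (ε : ℝ) (hε0 : 0 < ε) (hε1 : ε ≤ 1) (j k : ℕ) (hj : 10 ≤ j) (hk : 10 ≤ k)
    (hkj : k < j) : (j : ℝ) ^ ε / 5 + (k : ℝ) ^ ε / 5 < (2:ℝ) ^ j - (2:ℝ) ^ k := by
  have hj1 : (1:ℝ) ≤ (j:ℝ) := by exact_mod_cast le_trans (by norm_num) hj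
  have hk1 : (1:ℝ) ≤ (k:ℝ) := by exact_mod_cast le_trans (by norm_num) hk
  have hje : (j:ℝ) ^ ε ≤ (j:ℝ) := by
    calc (j:ℝ) ^ ε ≤ (j:ℝ) ^ (1:ℝ) := Real.rpow_le_rpow_of_exponent_le hj1 hε1
    _ = (j:ℝ) := Real.rpow_one _
  have hke : (k:ℝ) ^ ε ≤ (k:ℝ) := by
    calc (k:ℝ) ^ ε ≤ (k:ℝ) ^ (1:ℝ) := Real.rpow_le_rpow_of_exponent_le hk1 hε1
    _ = (k:ℝ) := Real.rpow_one _
  have hkj' : (k:ℝ) ≤ (j:ℝ) := by exact_mod_cast hkj.le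
  have h2k : (2:ℝ) ^ k ≤ (2:ℝ) ^ (j-1) := pow_le_pow_right₀ one_le_two (by omega)
  have h2j : (2:ℝ) ^ j = 2 * (2:ℝ) ^ (j-1) := by
    rw [← pow_succ']
    congr 1
    omega
  have hj2 : (j:ℝ) ≤ (2:ℝ) ^ (j - 1) := by
    have h := Nat.lt_two_pow_self (n := j-1)
    have : j ≤ 2 ^ (j-1) := by omega
    exact_mod_cast this
  have hpow : (0:ℝ) < (2:ℝ) ^ (j-1) := by positivity
  nlinarith

lemma lintegral_inv_eq_top (r C : ℝ) (hr : 0 < r) (hC : 0 < C) :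
    ∫⁻ x in Set.Ioo (0:ℝ) r, ENNReal.ofReal (C * x⁻¹) = ⊤ := by
  by_contra hne
  have hlt : ∫⁻ x in Set.Ioo (0:ℝ) r, ENNReal.ofReal (C * x⁻¹) < ⊤ := lt_top_iff_ne_top.2 hne
  have heq : ∀ x : ℝ, ENNReal.ofReal (C * x⁻¹) = ENNReal.ofReal C * ENNReal.ofReal x⁻¹ :=
    fun x => ENNReal.ofReal_mul hC.le
  simp only [heq] at hlt
  rw [lintegral_const_mul' _ _ ENNReal.ofReal_ne_top] at hlt
  have hfin : ∫⁻ x in Set.Ioo (0:ℝ) r, ENNReal.ofReal x⁻¹ < ⊤ := by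
    by_contra htop
    push_neg at htop
    rw [top_le_iff.1 htop, ENNReal.mul_top (by simp [hC, hC.ne'])] at hlt
    exact (lt_irrefl _ hlt).elim
  have hInt : IntegrableOn (fun x : ℝ => x⁻¹) (Set.Ioo (0:ℝ) r) := by
    constructor
    · exact (measurable_inv.aestronglyMeasurable : AEStronglyMeasurable (fun x:ℝ => x⁻¹) _)
    · rw [HasFiniteIntegral]
      have : ∀ᵐ x ∂(volume.restrict (Set.Ioo (0:ℝ) r)),
          ‖x⁻¹‖ₑ = ENNReal.ofReal x⁻¹ := by
        filter_upwards [ae_restrict_mem measurableSet_Ioo] with x hx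
        rw [← ofReal_norm, Real.norm_eq_abs,
          abs_of_nonneg (inv_nonneg.2 hx.1.le)]
      rwa [lintegral_congr_ae this]
  have hII : IntervalIntegrable (fun x : ℝ => x⁻¹) volume 0 r := by
    rwa [intervalIntegrable_iff_integrableOn_Ioo_of_le hr.le]
  rw [intervalIntegrable_inv_iff] at hII
  rcases hII with h | h
  · exact hr.ne' h.symm
  · exact h (by rw [Set.uIcc_of_le hr.le]; exact ⟨le_rfl, hr.le⟩)

set_option maxHeartbeats 2000000 in
/-- With `φ₀` having `𝓕φ₀ ∈ C_c^∞`, `0 ≤ 𝓕φ₀ ≤ 1`, `𝓕φ₀ = 1` on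
`{|ξ| < 1/10}`, `𝓕φ₀ = 0` on `{|ξ| > 1/5}`, `|φ₀| ≥ c₀ > 0` on `{|x| < ρ₀}`, and
`a_j = j^{-(1/2+δ)}`, `λ_j = j^ε`, `0 < 4δ ≤ ε < 1/10`, the function
`f = ∑_{j ≥ 10} a_j λ_j^{1/2} φ₀(λ_j x) e^{i 2^j x}` (with `j`-th Littlewood–Paley
piece `P_j f = g_j`, the `j`-th summand) satisfies:
(i) `‖f‖_{L²} < ∞`; (ii) `sup_j |a_j| λ_j^{1/2} < ∞` (so `‖f‖_{Ḃ⁰_{∞,∞}} < ∞`);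
(iii) `∫ (∑_j |g_j(x)|²)² dx = ∞`. Hence `‖∑_j (P_jf)²‖_{L²} ≲ ‖f‖_{L²} ‖f‖_{Ḃ⁰_{∞,∞}}`
fails. -/
theorem stmt6 (φ₀ : SchwartzMap ℝ ℂ)
    (hval : ∀ ξ : ℝ, (pFT1 (⇑φ₀) ξ).im = 0 ∧ 0 ≤ (pFT1 (⇑φ₀) ξ).re ∧ (pFT1 (⇑φ₀) ξ).re ≤ 1)
    (h1 : ∀ ξ : ℝ, |ξ| < 1 / 10 → pFT1 (⇑φ₀) ξ = 1)
    (h0 : ∀ ξ : ℝ, 1 / 5 < |ξ| → pFT1 (⇑φ₀) ξ = 0)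
    (ρ₀ c₀ : ℝ) (hρ₀ : 0 < ρ₀) (hc₀ : 0 < c₀)
    (hlow : ∀ x : ℝ, |x| < ρ₀ → c₀ ≤ ‖φ₀ x‖)
    (δ ε : ℝ) (hδ : 0 < δ) (hδε : 4 * δ ≤ ε) (hε : ε < 1 / 10)
    (g : ℕ → ℝ → ℂ)
    (hg : ∀ (j : ℕ) (x : ℝ), g j x = if 10 ≤ j then
        (((j : ℝ) ^ (-(1 / 2 + δ)) * (j : ℝ) ^ (ε / 2) : ℝ) : ℂ) *
          φ₀ ((j : ℝ) ^ ε * x) *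
          Complex.exp (Complex.I * (((2 : ℝ) ^ j * x : ℝ) : ℂ))
      else 0) :
    eLpNorm (fun x : ℝ => ∑' j : ℕ, g j x) 2 volume < ⊤ ∧
    BddAbove (Set.range fun j : ℕ => (j : ℝ) ^ (-(1 / 2 + δ)) * (j : ℝ) ^ (ε / 2)) ∧
    ∫⁻ x : ℝ, (∑' j : ℕ, (‖g j x‖₊ : ℝ≥0∞) ^ 2) ^ 2 ∂volume = ⊤ := by
  have hε0 : 0 < ε := lt_of_lt_of_le (by linarith) hδε
  have hε1 : ε ≤ 1 := by linarith
  have hval' : ∀ ξ : ℝ, (pFT1 (⇑φ₀) ξ).im = 0 := fun ξ => (hval ξ).1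
  set c : ℕ → ℝ := fun j : ℕ => (j : ℝ) ^ (-(1 / 2 + δ)) * (j : ℝ) ^ (ε / 2) with hcdef
  have hcnonneg : ∀ j, 0 ≤ c j := fun j =>
    mul_nonneg (Real.rpow_nonneg (Nat.cast_nonneg j) _) (Real.rpow_nonneg (Nat.cast_nonneg j) _)
  have hjR : ∀ j : ℕ, 10 ≤ j → (0:ℝ) < (j:ℝ) := fun j hj => by
    exact_mod_cast (by omega : 0 < j)
  have hjR1 : ∀ j : ℕ, 10 ≤ j → (1:ℝ) ≤ (j:ℝ) := fun j hj => by
    exact_mod_cast (by omega : 1 ≤ j)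
  have hcle : ∀ j, c j ≤ 1 := by
    intro j
    rcases Nat.eq_zero_or_pos j with h0' | hj
    · subst h0'
      have hc0 : c 0 = 0 := by
        simp only [hcdef, Nat.cast_zero]
        rw [Real.zero_rpow (ne_of_lt (by linarith : -(1/2+δ) < 0)), zero_mul]
      rw [hc0]; norm_num
    · have hj1 : (1:ℝ) ≤ (j:ℝ) := by exact_mod_cast hj
      have hjpos : (0:ℝ) < (j:ℝ) := by linarith
      have hcj : c j = (j:ℝ) ^ (-(1/2+δ) + ε/2) := by
        simp only [hcdef]
        rw [Real.rpow_add hjpos]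
      rw [hcj]
      exact Real.rpow_le_one_of_one_le_of_nonpos hj1 (by linarith)
  have hpart2 : BddAbove (Set.range fun j : ℕ => (j : ℝ) ^ (-(1 / 2 + δ)) * (j : ℝ) ^ (ε / 2)) := by
    refine ⟨1, ?_⟩
    rintro y ⟨j, rfl⟩
    exact hcle j
  -- basic facts about g
  have hlampos : ∀ j : ℕ, 10 ≤ j → (0:ℝ) < (j:ℝ)^ε := fun j hj =>
    Real.rpow_pos_of_pos (hjR j hj) _
  have hcg : ∀ (j : ℕ) (x : ℝ), 10 ≤ j → g j x =
      ((c j : ℝ) : ℂ) * φ₀ ((j : ℝ) ^ ε * x) *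
        Complex.exp (Complex.I * (((2 : ℝ) ^ j * x : ℝ) : ℂ)) := by
    intro j x hj
    rw [hg j x, if_pos hj]
  have hgzero : ∀ j, ¬(10 ≤ j) → ∀ x, g j x = 0 := fun j hj x => by rw [hg, if_neg hj]
  have hexp1 : ∀ r : ℝ, ‖Complex.exp (Complex.I * (r : ℂ))‖ = 1 := fun r => by
    rw [mul_comm]; exact Complex.norm_exp_ofReal_mul_I r
  have hnormg : ∀ (j : ℕ) (x : ℝ), 10 ≤ j → ‖g j x‖ = c j * ‖φ₀ ((j:ℝ)^ε * x)‖ := by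
    intro j x hj
    rw [hcg j x hj, norm_mul, norm_mul, hexp1, mul_one, Complex.norm_real,
      Real.norm_eq_abs, abs_of_nonneg (hcnonneg j)]
  have hgcont : ∀ j, Continuous (g j) := by
    intro j
    by_cases hj : 10 ≤ j
    · have : g j = fun x => ((c j : ℝ) : ℂ) * φ₀ ((j : ℝ) ^ ε * x) *
          Complex.exp (Complex.I * (((2 : ℝ) ^ j * x : ℝ) : ℂ)) := funext fun x => hcg j x hj
      rw [this]
      exact (continuous_const.mul (φ₀.continuous.comp (continuous_const.mul continuous_id))).mul
        (Complex.continuous_exp.comp (continuous_const.mul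
          (Complex.continuous_ofReal.comp (continuous_const.mul continuous_id))))
    · have : g j = fun _ => 0 := funext (hgzero j hj)
      rw [this]; exact continuous_const
  have hcsq : ∀ j : ℕ, 10 ≤ j → (c j)^2 = (j:ℝ)^(ε-(1+2*δ)) := by
    intro j hj
    have hjpos := hjR j hj
    simp only [hcdef]
    rw [mul_pow, ← Real.rpow_natCast ((j:ℝ)^(-(1/2+δ))) 2, ← Real.rpow_natCast ((j:ℝ)^(ε/2)) 2,
      ← Real.rpow_mul hjpos.le, ← Real.rpow_mul hjpos.le, ← Real.rpow_add hjpos]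
    congr 1
    push_cast
    ring
  -- integrability facts
  obtain ⟨Cφ, hCφ⟩ : ∃ C : ℝ, ∀ y : ℝ, ‖φ₀ y‖ ≤ C := by
    obtain ⟨C, hCpos, hC⟩ := φ₀.decay 0 0
    refine ⟨C, fun y => ?_⟩
    simpa [norm_iteratedFDeriv_zero] using hC y
  have hCφ0 : 0 ≤ Cφ := le_trans (norm_nonneg _) (hCφ 0)
  have hgbdd : ∀ j x, ‖g j x‖ ≤ c j * Cφ := by
    intro j x
    by_cases hj : 10 ≤ j
    · rw [hnormg j x hj]
      exact mul_le_mul_of_nonneg_left (hCφ _) (hcnonneg j)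
    · rw [hgzero j hj x, norm_zero]
      exact mul_nonneg (hcnonneg j) hCφ0
  have hgint : ∀ j, Integrable (g j) := by
    intro j
    by_cases hj : 10 ≤ j
    · have hint : Integrable (fun x : ℝ => c j * ‖φ₀ ((j:ℝ)^ε * x)‖) :=
        ((φ₀.integrable.norm.comp_mul_left' (hlampos j hj).ne')).const_mul _
      refine hint.mono' (hgcont j).aestronglyMeasurable
        (Filter.Eventually.of_forall fun x => ?_)
      exact le_of_eq (hnormg j x hj)
    · have : g j = fun _ => 0 := funext (hgzero j hj)
      rw [this]
      exact integrable_zero _ _ _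
  have hconjint : ∀ k, Integrable (fun x => (starRingEnd ℂ) (g k x)) := by
    intro k
    refine (hgint k).norm.mono' ((continuous_star.comp (hgcont k)).aestronglyMeasurable)
      (Filter.Eventually.of_forall fun x => ?_)
    exact le_of_eq (RCLike.norm_conj _)
  have hprodint : ∀ j k, Integrable (fun x => g j x * (starRingEnd ℂ) (g k x)) := fun j k =>
    Integrable.bdd_mul (c := c j * Cφ) (hconjint k) (hgcont j).aestronglyMeasurable
      (Filter.Eventually.of_forall fun x => hgbdd j x)
  -- cross terms vanish
  have hcross : ∀ j k : ℕ, j ≠ k → ∫ x : ℝ, g j x * (starRingEnd ℂ) (g k x) = 0 := by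
    intro j k hjk
    by_cases hj : 10 ≤ j
    · by_cases hk : 10 ≤ k
      · set θ : ℝ := (2:ℝ)^j - (2:ℝ)^k with hθ
        have hsep : (j:ℝ)^ε/5 + (k:ℝ)^ε/5 < |θ| := by
          rcases lt_or_gt_of_ne hjk with h | h
          · have h2 : (2:ℝ)^j < (2:ℝ)^k := pow_lt_pow_right₀ one_lt_two h
            rw [hθ, abs_of_neg (by linarith), neg_sub]
            have := sep_lemma ε hε0 hε1 k j hk hj h
            linarith
          · have h2 : (2:ℝ)^k < (2:ℝ)^j := pow_lt_pow_right₀ one_lt_two h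
            rw [hθ, abs_of_pos (by linarith)]
            exact sep_lemma ε hε0 hε1 j k hj hk h
        have hortho := ortho φ₀ hval' h0 ((j:ℝ)^ε) ((k:ℝ)^ε) θ
          (hlampos j hj) (hlampos k hk) hsep
        have hptw : ∀ x : ℝ, g j x * (starRingEnd ℂ) (g k x) =
            ((c j * c k : ℝ) : ℂ) * (φ₀ ((j:ℝ)^ε * x) * (starRingEnd ℂ) (φ₀ ((k:ℝ)^ε * x)) *
              Complex.exp (Complex.I * ((θ * x : ℝ) : ℂ))) := by
          intro x
          have hconjk : (starRingEnd ℂ) (g k x) = ((c k : ℝ) : ℂ) *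
              (starRingEnd ℂ) (φ₀ ((k:ℝ)^ε * x)) *
              Complex.exp (-Complex.I * (((2:ℝ)^k * x : ℝ) : ℂ)) := by
            rw [hcg k x hk, map_mul (starRingEnd ℂ), map_mul (starRingEnd ℂ),
              Complex.conj_ofReal, ← Complex.exp_conj, map_mul (starRingEnd ℂ),
              Complex.conj_I, Complex.conj_ofReal, neg_mul]
          rw [hcg j x hj, hconjk]
          have hexp : Complex.exp (Complex.I * (((2:ℝ)^j * x : ℝ) : ℂ)) *
              Complex.exp (-Complex.I * (((2:ℝ)^k * x : ℝ) : ℂ)) =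
              Complex.exp (Complex.I * ((θ * x : ℝ) : ℂ)) := by
            rw [← Complex.exp_add]
            congr 1
            rw [hθ]
            push_cast
            ring
          rw [← hexp]
          push_cast
          ring
        rw [integral_congr_ae (Filter.Eventually.of_forall hptw), integral_const_mul,
          hortho, mul_zero]
      · have hz : ∀ x : ℝ, g j x * (starRingEnd ℂ) (g k x) = 0 := fun x => by
          rw [hgzero k hk x, map_zero, mul_zero]
        rw [integral_congr_ae (Filter.Eventually.of_forall hz), integral_zero]
    · have hz : ∀ x : ℝ, g j x * (starRingEnd ℂ) (g k x) = 0 := fun x => by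
        rw [hgzero j hj x, zero_mul]
      rw [integral_congr_ae (Filter.Eventually.of_forall hz), integral_zero]
  -- diagonal values
  set Kφ : ℝ := ∫ y : ℝ, ‖φ₀ y‖^2 with hKφdef
  have hKφ0 : 0 ≤ Kφ := integral_nonneg fun y => sq_nonneg _
  have hdiag : ∀ j, 10 ≤ j → ∫ x : ℝ, ‖g j x‖^2 = (j:ℝ)^(-(1+2*δ)) * Kφ := by
    intro j hj
    have hjpos := hjR j hj
    have hstep : ∀ x : ℝ, ‖g j x‖^2 = (c j)^2 * (fun y => ‖φ₀ y‖^2) ((j:ℝ)^ε * x) := by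
      intro x
      rw [hnormg j x hj, mul_pow]
    calc ∫ x : ℝ, ‖g j x‖^2
        = ∫ x : ℝ, (c j)^2 * (fun y => ‖φ₀ y‖^2) ((j:ℝ)^ε * x) :=
          integral_congr_ae (Filter.Eventually.of_forall hstep)
      _ = (c j)^2 * ∫ x : ℝ, (fun y => ‖φ₀ y‖^2) ((j:ℝ)^ε * x) := integral_const_mul _ _
      _ = (c j)^2 * (|((j:ℝ)^ε)⁻¹| • Kφ) := by
          rw [MeasureTheory.Measure.integral_comp_mul_left (fun y => ‖φ₀ y‖^2) ((j:ℝ)^ε)]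
      _ = ((c j)^2 * ((j:ℝ)^ε)⁻¹) * Kφ := by
          rw [abs_of_pos (inv_pos.2 (hlampos j hj)), smul_eq_mul]
          ring
      _ = (j:ℝ)^(-(1+2*δ)) * Kφ := by
          congr 1
          rw [hcsq j hj, ← Real.rpow_neg hjpos.le, ← Real.rpow_add hjpos]
          congr 1
          ring
  -- p-series
  have hsummable : Summable (fun j : ℕ => (j:ℝ)^(-(1+2*δ))) :=
    Real.summable_nat_rpow.2 (by linarith)
  have hterm0 : ∀ j : ℕ, 0 ≤ (j:ℝ)^(-(1+2*δ)) := fun j =>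
    Real.rpow_nonneg (Nat.cast_nonneg j) _
  -- partial sums
  set S : ℕ → ℝ → ℂ := fun N x => ∑ j ∈ Finset.range N, g j x with hSdef
  have hScont : ∀ N, Continuous (S N) := fun N => continuous_finset_sum _ (fun j _ => hgcont j)
  have hSexpand : ∀ N x, S N x * (starRingEnd ℂ) (S N x) =
      ∑ j ∈ Finset.range N, ∑ k ∈ Finset.range N, g j x * (starRingEnd ℂ) (g k x) := by
    intro N x
    rw [hSdef]
    simp only
    rw [map_sum, Finset.sum_mul_sum]
  have hSsq_int : ∀ N, Integrable (fun x => S N x * (starRingEnd ℂ) (S N x)) := by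
    intro N
    have heq : (fun x => S N x * (starRingEnd ℂ) (S N x)) =
        fun x => ∑ j ∈ Finset.range N, ∑ k ∈ Finset.range N,
          g j x * (starRingEnd ℂ) (g k x) := funext fun x => hSexpand N x
    rw [heq]
    exact integrable_finset_sum _ fun j _ => integrable_finset_sum _ fun k _ => hprodint j k
  have hmc : ∀ z : ℂ, ((‖z‖^2 : ℝ) : ℂ) = z * (starRingEnd ℂ) z := fun z => by
    rw [Complex.mul_conj, Complex.normSq_eq_norm_sq]
  have hdiagC : ∀ j : ℕ, ∫ x : ℝ, g j x * (starRingEnd ℂ) (g j x) =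
      ((∫ x : ℝ, ‖g j x‖^2 : ℝ) : ℂ) := by
    intro j
    rw [show (fun x : ℝ => g j x * (starRingEnd ℂ) (g j x)) =
        fun x : ℝ => ((‖g j x‖^2 : ℝ) : ℂ) from funext fun x => (hmc _).symm]
    exact integral_ofReal
  have hSint : ∀ N, ∫ x : ℝ, ‖S N x‖^2 = ∑ j ∈ Finset.range N, ∫ x : ℝ, ‖g j x‖^2 := by
    intro N
    have key : ((∫ x : ℝ, ‖S N x‖^2 : ℝ) : ℂ) =
        ((∑ j ∈ Finset.range N, ∫ x : ℝ, ‖g j x‖^2 : ℝ) : ℂ) := by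
      calc ((∫ x : ℝ, ‖S N x‖^2 : ℝ) : ℂ)
          = ∫ x : ℝ, ((‖S N x‖^2 : ℝ) : ℂ) := integral_ofReal.symm
        _ = ∫ x : ℝ, S N x * (starRingEnd ℂ) (S N x) :=
            integral_congr_ae (Filter.Eventually.of_forall fun x => hmc (S N x))
        _ = ∫ x : ℝ, ∑ j ∈ Finset.range N, ∑ k ∈ Finset.range N,
              g j x * (starRingEnd ℂ) (g k x) :=
            integral_congr_ae (Filter.Eventually.of_forall fun x => hSexpand N x)
        _ = ∑ j ∈ Finset.range N, ∫ x : ℝ, ∑ k ∈ Finset.range N,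
              g j x * (starRingEnd ℂ) (g k x) :=
            integral_finset_sum _ fun j _ =>
              integrable_finset_sum _ fun k _ => hprodint j k
        _ = ∑ j ∈ Finset.range N, ∑ k ∈ Finset.range N,
              ∫ x : ℝ, g j x * (starRingEnd ℂ) (g k x) :=
            Finset.sum_congr rfl fun j _ => integral_finset_sum _ fun k _ => hprodint j k
        _ = ∑ j ∈ Finset.range N, ∫ x : ℝ, g j x * (starRingEnd ℂ) (g j x) :=
            Finset.sum_congr rfl fun j hjmem =>
              Finset.sum_eq_single_of_mem j hjmem fun k _ hkj => hcross j k (Ne.symm hkj)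
        _ = ∑ j ∈ Finset.range N, ((∫ x : ℝ, ‖g j x‖^2 : ℝ) : ℂ) :=
            Finset.sum_congr rfl fun j _ => hdiagC j
        _ = ((∑ j ∈ Finset.range N, ∫ x : ℝ, ‖g j x‖^2 : ℝ) : ℂ) := by
            rw [Complex.ofReal_sum]
    exact_mod_cast key
  have hSnormsq_int : ∀ N, Integrable (fun x => ‖S N x‖^2) := by
    intro N
    refine (hSsq_int N).re.congr (Filter.Eventually.of_forall fun x => ?_)
    show RCLike.re (S N x * (starRingEnd ℂ) (S N x)) = ‖S N x‖^2
    rw [← hmc (S N x), RCLike.re_to_complex, Complex.ofReal_re]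
  have hSbound : ∀ N, ∫ x : ℝ, ‖S N x‖^2 ≤ Kφ * (∑' j : ℕ, (j:ℝ)^(-(1+2*δ))) := by
    intro N
    rw [hSint N]
    have h1 : ∀ j ∈ Finset.range N, ∫ x : ℝ, ‖g j x‖^2 ≤ (j:ℝ)^(-(1+2*δ)) * Kφ := by
      intro j _
      by_cases hj : 10 ≤ j
      · rw [hdiag j hj]
      · have hz : ∀ x : ℝ, ‖g j x‖^2 = 0 := fun x => by rw [hgzero j hj x]; simp
        rw [integral_congr_ae (Filter.Eventually.of_forall hz), integral_zero]
        exact mul_nonneg (hterm0 j) hKφ0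
    calc ∑ j ∈ Finset.range N, ∫ x : ℝ, ‖g j x‖^2
        ≤ ∑ j ∈ Finset.range N, (j:ℝ)^(-(1+2*δ)) * Kφ := Finset.sum_le_sum h1
      _ = (∑ j ∈ Finset.range N, (j:ℝ)^(-(1+2*δ))) * Kφ := (Finset.sum_mul _ _ _).symm
      _ ≤ (∑' j : ℕ, (j:ℝ)^(-(1+2*δ))) * Kφ :=
          mul_le_mul_of_nonneg_right (Summable.sum_le_tsum _ (fun j _ => hterm0 j) hsummable) hKφ0
      _ = Kφ * (∑' j : ℕ, (j:ℝ)^(-(1+2*δ))) := mul_comm _ _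
  -- pointwise summability
  have hsum : ∀ x : ℝ, x ≠ 0 → Summable (fun j : ℕ => g j x) := by
    intro x hx
    set k : ℕ := ⌈2/ε⌉₊ + 1 with hkdef
    have hk2 : 2/ε ≤ (k:ℝ) := by
      have := Nat.le_ceil (2/ε)
      have h2 : ((⌈2/ε⌉₊ : ℕ) : ℝ) ≤ (k:ℝ) := by
        rw [hkdef]; push_cast; linarith
      linarith
    have hkε : 2 ≤ ε * k := by
      have h3 : ε * (2/ε) ≤ ε * (k:ℝ) := mul_le_mul_of_nonneg_left hk2 hε0.le
      rw [mul_div_cancel₀ _ hε0.ne'] at h3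
      exact h3
    obtain ⟨C, hCpos, hC⟩ := φ₀.decay k 0
    have hxk : (0:ℝ) < |x|^k := pow_pos (abs_pos.2 hx) k
    have hφdecay : ∀ y : ℝ, y ≠ 0 → ‖φ₀ y‖ ≤ C / |y|^k := by
      intro y hy
      have h1 := hC y
      rw [norm_iteratedFDeriv_zero] at h1
      rw [le_div_iff₀ (pow_pos (abs_pos.2 hy) k)]
      calc ‖φ₀ y‖ * |y|^k = ‖y‖^k * ‖φ₀ y‖ := by rw [Real.norm_eq_abs]; ring
        _ ≤ C := h1
    refine Summable.of_norm_bounded (g := fun j : ℕ => (C / |x|^k) * (j:ℝ)^(-(2:ℝ)))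
      (((Real.summable_nat_rpow).2 (by norm_num)).mul_left _) ?_
    intro j
    by_cases hj : 10 ≤ j
    · have hjpos := hjR j hj
      have hj1 := hjR1 j hj
      have hlamx : (j:ℝ)^ε * x ≠ 0 := mul_ne_zero (hlampos j hj).ne' hx
      rw [hnormg j x hj]
      have hstep1 : c j * ‖φ₀ ((j:ℝ)^ε * x)‖ ≤ c j * (C / |(j:ℝ)^ε * x|^k) :=
        mul_le_mul_of_nonneg_left (hφdecay _ hlamx) (hcnonneg j)
      have habs : |(j:ℝ)^ε * x|^k = ((j:ℝ)^ε)^k * |x|^k := by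
        rw [abs_mul, mul_pow, abs_of_pos (hlampos j hj)]
      have hstep2 : c j * (C / |(j:ℝ)^ε * x|^k) = (C / |x|^k) * (c j * (((j:ℝ)^ε)^k)⁻¹) := by
        rw [habs]
        field_simp
      have hstep3 : c j * (((j:ℝ)^ε)^k)⁻¹ ≤ (j:ℝ)^(-(2:ℝ)) := by
        rw [← Real.rpow_natCast ((j:ℝ)^ε) k, ← Real.rpow_mul hjpos.le,
          ← Real.rpow_neg hjpos.le]
        have : c j = (j:ℝ)^(-(1/2+δ) + ε/2) := by
          simp only [hcdef]
          rw [Real.rpow_add hjpos]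
        rw [this, ← Real.rpow_add hjpos]
        apply Real.rpow_le_rpow_of_exponent_le hj1
        have : 2 ≤ ε * (k:ℕ) := hkε
        nlinarith
      calc c j * ‖φ₀ ((j:ℝ)^ε * x)‖ ≤ (C / |x|^k) * (c j * (((j:ℝ)^ε)^k)⁻¹) := by
            rw [← hstep2]; exact hstep1
        _ ≤ (C / |x|^k) * (j:ℝ)^(-(2:ℝ)) :=
            mul_le_mul_of_nonneg_left hstep3 (div_nonneg hCpos.le hxk.le)
    · rw [hgzero j hj x, norm_zero]
      exact mul_nonneg (div_nonneg hCpos.le hxk.le)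
        (Real.rpow_nonneg (Nat.cast_nonneg j) _)
  have hae : ∀ᵐ x : ℝ ∂(volume : Measure ℝ), x ≠ 0 := by
    rw [ae_iff]
    have hset : {x : ℝ | ¬ x ≠ 0} = {0} := by ext x; simp
    rw [hset]
    exact measure_singleton 0
  have hSmeas : ∀ N, Measurable fun x => (‖S N x‖₊ : ℝ≥0∞)^2 := fun N =>
    ((hScont N).measurable.nnnorm.coe_nnreal_ennreal).pow_const 2
  have hfatou : ∫⁻ x : ℝ, (‖∑' j : ℕ, g j x‖₊ : ℝ≥0∞)^2 ≤
      ENNReal.ofReal (Kφ * (∑' j : ℕ, (j:ℝ)^(-(1+2*δ)))) := by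
    have hstep1 : ∫⁻ x : ℝ, (‖∑' j : ℕ, g j x‖₊ : ℝ≥0∞)^2 ≤
        ∫⁻ x : ℝ, Filter.liminf (fun N => (‖S N x‖₊ : ℝ≥0∞)^2) Filter.atTop := by
      refine lintegral_mono_ae ?_
      filter_upwards [hae] with x hx
      have ht : Filter.Tendsto (fun N => (‖S N x‖₊ : ℝ≥0∞)^2) Filter.atTop
          (nhds ((‖∑' j : ℕ, g j x‖₊ : ℝ≥0∞)^2)) := by
        have h1 := ((hsum x hx).hasSum.tendsto_sum_nat).nnnorm
        have h2 : Filter.Tendsto (fun N => (‖S N x‖₊ : ℝ≥0∞)) Filter.atTop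
            (nhds (‖∑' j : ℕ, g j x‖₊ : ℝ≥0∞)) := ENNReal.tendsto_coe.2 h1
        exact ((ENNReal.continuous_pow 2).continuousAt.tendsto).comp h2
      rw [ht.liminf_eq]
    have hstep2 : ∫⁻ x : ℝ, Filter.liminf (fun N => (‖S N x‖₊ : ℝ≥0∞)^2) Filter.atTop ≤
        Filter.liminf (fun N => ∫⁻ x : ℝ, (‖S N x‖₊ : ℝ≥0∞)^2) Filter.atTop :=
      lintegral_liminf_le hSmeas
    have hstep3 : ∀ N, ∫⁻ x : ℝ, (‖S N x‖₊ : ℝ≥0∞)^2 ≤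
        ENNReal.ofReal (Kφ * (∑' j : ℕ, (j:ℝ)^(-(1+2*δ)))) := by
      intro N
      have heq : ∫⁻ x : ℝ, (‖S N x‖₊ : ℝ≥0∞)^2 = ENNReal.ofReal (∫ x : ℝ, ‖S N x‖^2) := by
        rw [ofReal_integral_eq_lintegral_ofReal (hSnormsq_int N)
          (Filter.Eventually.of_forall fun x => sq_nonneg _)]
        refine lintegral_congr fun x => ?_
        rw [ENNReal.ofReal_pow (norm_nonneg _), ofReal_norm, enorm_eq_nnnorm]
      rw [heq]
      exact ENNReal.ofReal_le_ofReal (hSbound N)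
    have hstep4 : Filter.liminf (fun N => ∫⁻ x : ℝ, (‖S N x‖₊ : ℝ≥0∞)^2) Filter.atTop ≤
        ENNReal.ofReal (Kφ * (∑' j : ℕ, (j:ℝ)^(-(1+2*δ)))) :=
      Filter.liminf_le_of_frequently_le (Filter.Frequently.of_forall hstep3)
    exact le_trans hstep1 (le_trans hstep2 hstep4)
  have hpart1 : eLpNorm (fun x : ℝ => ∑' j : ℕ, g j x) 2 volume < ⊤ := by
    rw [eLpNorm_lt_top_iff_lintegral_rpow_enorm_lt_top (by norm_num) (by norm_num)]
    have htwo : ((2:ℝ≥0∞).toReal) = ((2:ℕ):ℝ) := by simp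
    rw [htwo]
    simp_rw [ENNReal.rpow_natCast]
    exact lt_of_le_of_lt hfatou ENNReal.ofReal_lt_top
  -- part (iii)
  set r : ℝ := ρ₀/72 with hrdef
  have hr : 0 < r := by rw [hrdef]; positivity
  set C₁ : ℝ := c₀^2*c₀^2/16 * (ρ₀/2) with hC₁def
  have hC₁ : 0 < C₁ := by rw [hC₁def]; positivity
  have hmain : ∀ x ∈ Set.Ioo (0:ℝ) r,
      ENNReal.ofReal (C₁ * x⁻¹) ≤ (∑' j : ℕ, (‖g j x‖₊ : ℝ≥0∞)^2)^2 := by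
    intro x hx
    obtain ⟨hx0, hxr⟩ := hx
    have h2x : (0:ℝ) < 2*x := by linarith
    have hbase : (36:ℝ) < ρ₀/(2*x) := by
      rw [lt_div_iff₀ h2x]
      rw [hrdef] at hxr
      nlinarith
    have hbase0 : (0:ℝ) < ρ₀/(2*x) := by linarith
    have hbase1 : (1:ℝ) ≤ ρ₀/(2*x) := by linarith
    set y : ℝ := (ρ₀/(2*x))^(1/ε) with hydef
    have h1ε : (1:ℝ) ≤ 1/ε := by
      rw [le_div_iff₀ hε0]; linarith
    have hy36 : (36:ℝ) ≤ y := by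
      calc (36:ℝ) ≤ ρ₀/(2*x) := hbase.le
        _ = (ρ₀/(2*x))^(1:ℝ) := (Real.rpow_one _).symm
        _ ≤ y := by rw [hydef]; exact Real.rpow_le_rpow_of_exponent_le hbase1 h1ε
    have hy0 : (0:ℝ) < y := by linarith
    set N : ℕ := ⌊y⌋₊ with hNdef
    have hN36 : 36 ≤ N := by
      rw [hNdef]
      exact Nat.le_floor (by exact_mod_cast hy36)
    have hNy : (N:ℝ) ≤ y := Nat.floor_le hy0.le
    have hyN : y/2 ≤ (N:ℝ) := by
      have hfl := Nat.sub_one_lt_floor y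
      rw [← hNdef] at hfl
      linarith
    have hNR : (36:ℝ) ≤ (N:ℝ) := by exact_mod_cast hN36
    have hNpos : (0:ℝ) < (N:ℝ) := by linarith
    have hyε : y^ε = ρ₀/(2*x) := by
      rw [hydef, ← Real.rpow_mul hbase0.le, one_div, inv_mul_cancel₀ hε0.ne', Real.rpow_one]
    have hjb : ∀ j ∈ Finset.Icc 10 N,
        ENNReal.ofReal (c₀^2 * (N:ℝ)^(ε-(1+2*δ))) ≤ (‖g j x‖₊ : ℝ≥0∞)^2 := by
      intro j hjmem
      obtain ⟨hj10, hjN⟩ := Finset.mem_Icc.1 hjmem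
      have hjpos := hjR j hj10
      have hjles : |(j:ℝ)^ε * x| < ρ₀ := by
        have ha1 : (j:ℝ)^ε ≤ (N:ℝ)^ε :=
          Real.rpow_le_rpow hjpos.le (by exact_mod_cast hjN) hε0.le
        have ha2 : (N:ℝ)^ε ≤ y^ε := Real.rpow_le_rpow (Nat.cast_nonneg N) hNy hε0.le
        have ha3 : (j:ℝ)^ε * x ≤ (ρ₀/(2*x)) * x := by
          rw [← hyε]
          exact mul_le_mul_of_nonneg_right (ha1.trans ha2) hx0.le
        have ha4 : (ρ₀/(2*x)) * x = ρ₀/2 := by field_simp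
        rw [abs_of_nonneg (mul_nonneg (Real.rpow_nonneg (Nat.cast_nonneg j) ε) hx0.le)]
        linarith
      have hlow' : c₀ ≤ ‖φ₀ ((j:ℝ)^ε * x)‖ := hlow _ hjles
      have hnb : c₀ * c j ≤ ‖g j x‖ := by
        rw [hnormg j x hj10, mul_comm c₀ (c j)]
        exact mul_le_mul_of_nonneg_left hlow' (hcnonneg j)
      have h5 : ENNReal.ofReal ((c₀ * c j)^2) ≤ (‖g j x‖₊ : ℝ≥0∞)^2 := by
        calc ENNReal.ofReal ((c₀ * c j)^2)
            = (ENNReal.ofReal (c₀ * c j))^2 :=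
              ENNReal.ofReal_pow (mul_nonneg hc₀.le (hcnonneg j)) 2
          _ ≤ (ENNReal.ofReal ‖g j x‖)^2 :=
              pow_le_pow_left' (ENNReal.ofReal_le_ofReal hnb) 2
          _ = (‖g j x‖₊ : ℝ≥0∞)^2 := by rw [ofReal_norm, enorm_eq_nnnorm]
      refine le_trans (ENNReal.ofReal_le_ofReal ?_) h5
      have h6 : (N:ℝ)^(ε-(1+2*δ)) ≤ (c j)^2 := by
        rw [hcsq j hj10]
        exact Real.rpow_le_rpow_of_nonpos hjpos (by exact_mod_cast hjN) (by linarith)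
      calc c₀^2 * (N:ℝ)^(ε-(1+2*δ)) ≤ c₀^2 * (c j)^2 :=
            mul_le_mul_of_nonneg_left h6 (sq_nonneg c₀)
        _ = (c₀ * c j)^2 := (mul_pow _ _ _).symm
    have hcard : (Finset.Icc 10 N).card = N - 9 := by
      rw [Nat.card_Icc]
      omega
    have hsum1 : ENNReal.ofReal (((N:ℝ) - 9) * (c₀^2 * (N:ℝ)^(ε-(1+2*δ)))) ≤
        ∑' j : ℕ, (‖g j x‖₊ : ℝ≥0∞)^2 := by
      have h8 : ∑ j ∈ Finset.Icc 10 N, (‖g j x‖₊ : ℝ≥0∞)^2 ≤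
          ∑' j : ℕ, (‖g j x‖₊ : ℝ≥0∞)^2 := ENNReal.sum_le_tsum _
      have h9 : (Finset.Icc 10 N).card • ENNReal.ofReal (c₀^2 * (N:ℝ)^(ε-(1+2*δ))) ≤
          ∑ j ∈ Finset.Icc 10 N, (‖g j x‖₊ : ℝ≥0∞)^2 :=
        Finset.card_nsmul_le_sum _ _ _ hjb
      refine le_trans ?_ (le_trans h9 h8)
      rw [hcard, nsmul_eq_mul, ← ENNReal.ofReal_natCast (N-9),
        ← ENNReal.ofReal_mul (Nat.cast_nonneg _)]
      refine ENNReal.ofReal_le_ofReal (le_of_eq ?_)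
      rw [Nat.cast_sub (by omega : 9 ≤ N)]
      norm_num
    have hA1 : (c₀^2/2) * (N:ℝ)^(ε-2*δ) ≤ ((N:ℝ) - 9) * (c₀^2 * (N:ℝ)^(ε-(1+2*δ))) := by
      have hNN : (N:ℝ) * (N:ℝ)^(ε-(1+2*δ)) = (N:ℝ)^(ε-2*δ) := by
        nth_rewrite 1 [← Real.rpow_one (N:ℝ)]
        rw [← Real.rpow_add hNpos]
        congr 1
        ring
      calc (c₀^2/2) * (N:ℝ)^(ε-2*δ) = ((N:ℝ)/2) * (c₀^2 * (N:ℝ)^(ε-(1+2*δ))) := by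
            rw [← hNN]; ring
        _ ≤ ((N:ℝ) - 9) * (c₀^2 * (N:ℝ)^(ε-(1+2*δ))) :=
            mul_le_mul_of_nonneg_right (by linarith)
              (mul_nonneg (sq_nonneg c₀) (Real.rpow_nonneg hNpos.le _))
    have hNs : y^(ε-2*δ)/2 ≤ (N:ℝ)^(ε-2*δ) := by
      have hc1 : (y/2)^(ε-2*δ) ≤ (N:ℝ)^(ε-2*δ) :=
        Real.rpow_le_rpow (by linarith) hyN (by linarith)
      have hc2 : (y/2)^(ε-2*δ) = y^(ε-2*δ) / (2:ℝ)^(ε-2*δ) :=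
        Real.div_rpow hy0.le (by norm_num : (0:ℝ) ≤ 2) _
      have hc3 : (2:ℝ)^(ε-2*δ) ≤ 2 := by
        calc (2:ℝ)^(ε-2*δ) ≤ (2:ℝ)^(1:ℝ) :=
            Real.rpow_le_rpow_of_exponent_le one_le_two (by linarith)
          _ = 2 := Real.rpow_one 2
      have hc4 : y^(ε-2*δ)/2 ≤ y^(ε-2*δ) / (2:ℝ)^(ε-2*δ) := by
        apply div_le_div_of_nonneg_left (Real.rpow_nonneg hy0.le _)
          (Real.rpow_pos_of_pos two_pos _) hc3
      linarith
    have hsqy : ρ₀/(2*x) ≤ (y^(ε-2*δ))^2 := by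
      have hd1 : (y^(ε-2*δ))^2 = y^((ε-2*δ)*2) := by
        rw [← Real.rpow_natCast (y^(ε-2*δ)) 2, ← Real.rpow_mul hy0.le]
        norm_num
      have hd2 : y^((ε-2*δ)*2) = (ρ₀/(2*x))^((1/ε)*((ε-2*δ)*2)) := by
        rw [hydef, ← Real.rpow_mul hbase0.le]
      have hd3 : (1:ℝ) ≤ (1/ε)*((ε-2*δ)*2) := by
        rw [one_div]
        have he1 : ε ≤ (ε-2*δ)*2 := by linarith
        have he2 : ε⁻¹*ε ≤ ε⁻¹*((ε-2*δ)*2) :=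
          mul_le_mul_of_nonneg_left he1 (by positivity)
        rwa [inv_mul_cancel₀ hε0.ne'] at he2
      calc ρ₀/(2*x) = (ρ₀/(2*x))^(1:ℝ) := (Real.rpow_one _).symm
        _ ≤ (ρ₀/(2*x))^((1/ε)*((ε-2*δ)*2)) :=
            Real.rpow_le_rpow_of_exponent_le hbase1 hd3
        _ = (y^(ε-2*δ))^2 := by rw [← hd2, ← hd1]
    have hchain : C₁ * x⁻¹ ≤ (((N:ℝ) - 9) * (c₀^2 * (N:ℝ)^(ε-(1+2*δ))))^2 := by
      calc C₁ * x⁻¹ = (c₀^2*c₀^2/16) * (ρ₀/(2*x)) := by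
            rw [hC₁def]; field_simp
        _ ≤ (c₀^2*c₀^2/16) * (y^(ε-2*δ))^2 :=
            mul_le_mul_of_nonneg_left hsqy (by positivity)
        _ = ((c₀^2/2))^2 * ((y^(ε-2*δ))/2)^2 := by ring
        _ ≤ ((c₀^2/2))^2 * ((N:ℝ)^(ε-2*δ))^2 := by
            refine mul_le_mul_of_nonneg_left ?_ (by positivity)
            refine pow_le_pow_left₀ (by positivity) hNs 2
        _ = ((c₀^2/2) * (N:ℝ)^(ε-2*δ))^2 := by ring
        _ ≤ (((N:ℝ) - 9) * (c₀^2 * (N:ℝ)^(ε-(1+2*δ))))^2 := by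
            refine pow_le_pow_left₀ (by positivity) hA1 2
    calc ENNReal.ofReal (C₁ * x⁻¹)
        ≤ ENNReal.ofReal ((((N:ℝ) - 9) * (c₀^2 * (N:ℝ)^(ε-(1+2*δ))))^2) :=
          ENNReal.ofReal_le_ofReal hchain
      _ = (ENNReal.ofReal (((N:ℝ) - 9) * (c₀^2 * (N:ℝ)^(ε-(1+2*δ)))))^2 :=
          ENNReal.ofReal_pow
            (mul_nonneg (by linarith) (mul_nonneg (sq_nonneg c₀)
              (Real.rpow_nonneg hNpos.le _))) 2
      _ ≤ (∑' j : ℕ, (‖g j x‖₊ : ℝ≥0∞)^2)^2 := by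
          exact pow_le_pow_left' hsum1 2
  have hpart3 : ∫⁻ x : ℝ, (∑' j : ℕ, (‖g j x‖₊ : ℝ≥0∞)^2)^2 = ⊤ := by
    rw [eq_top_iff]
    calc (⊤:ℝ≥0∞) = ∫⁻ x in Set.Ioo (0:ℝ) r, ENNReal.ofReal (C₁ * x⁻¹) :=
        (lintegral_inv_eq_top r C₁ hr hC₁).symm
      _ ≤ ∫⁻ x in Set.Ioo (0:ℝ) r, (∑' j : ℕ, (‖g j x‖₊ : ℝ≥0∞)^2)^2 := by
          refine lintegral_mono_ae ?_
          filter_upwards [ae_restrict_mem measurableSet_Ioo] with x hx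
          exact hmain x hx
      _ ≤ ∫⁻ x : ℝ, (∑' j : ℕ, (‖g j x‖₊ : ℝ≥0∞)^2)^2 := setLIntegral_le_lintegral _ _
  exact ⟨hpart1, hpart2, hpart3⟩
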